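/- For every κ ≥ 1, p ∈ (0,1) and Y_M > 0 there exist constants a, b (depending only on κ, p, Y_M) with the following property: for every connected d-regular restricted-growth graph G with growth constant κ on n vertices, every 3-net clustering of G, cluster randomization with parameter p, any one of the exposure conditions full neighborhood, absolute k-neighborhood, or fractional q-neighborhood, and any response functions constant on each exposure event with values in [0, Y_M], the Horvitz–Thompson estimator satisfies Var[τ̂(Z)] ≤ (a + b·d)/n, i.e., the variance is upper bounded by a function linear in the degree d. -/

import Mathlib

open Finset
open scoped Classical

noncomputable section

/-- Probability weight of a coin vector of independent Bernoulli(p) cluster coins. -/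
def coinWt (p : ℝ) {J : Type*} [Fintype J] (x : J → Bool) : ℝ :=
  ∏ j, if x j then p else 1 - p

/-- Probability of an event `A` of assignment vectors under cluster randomization
with cluster map `c` and parameter `p`. -/
def clusterPr {V : Type*} [Fintype V] {J : Type*} [Fintype J]
    (p : ℝ) (c : V → J) (A : Set (V → Bool)) : ℝ :=
  ∑ x : J → Bool, coinWt p x * (if (fun v => x (c v)) ∈ A then 1 else 0)

/-- The Horvitz–Thompson estimator. -/
def htEst {V : Type*} [Fintype V] (pr : Set (V → Bool) → ℝ)
    (σ1 σ0 : V → Set (V → Bool)) (Y : V → (V → Bool) → ℝ) (z : V → Bool) : ℝ :=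
  (Fintype.card V : ℝ)⁻¹ *
    ∑ i : V, ((if z ∈ σ1 i then Y i z else 0) / pr (σ1 i)
      - (if z ∈ σ0 i then Y i z else 0) / pr (σ0 i))

/-- Variance of the Horvitz–Thompson estimator under cluster randomization. -/
def clusterVar {V : Type*} [Fintype V] {J : Type*} [Fintype J]
    (p : ℝ) (c : V → J) (σ1 σ0 : V → Set (V → Bool)) (Y : V → (V → Bool) → ℝ) : ℝ :=
  (∑ x : J → Bool, coinWt p x *
      (htEst (clusterPr p c) σ1 σ0 Y (fun v => x (c v))) ^ 2)
  - (∑ x : J → Bool, coinWt p x *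
      htEst (clusterPr p c) σ1 σ0 Y (fun v => x (c v))) ^ 2

/-- Full neighborhood exposure to condition `b`. -/
def fullExp {V : Type*} [Fintype V] (G : SimpleGraph V) (b : Bool) (v : V) :
    Set (V → Bool) :=
  {z | z v = b ∧ ∀ u ∈ G.neighborFinset v, z u = b}

/-- Absolute `k`-neighborhood exposure to condition `b`. -/
def absExp {V : Type*} [Fintype V] (G : SimpleGraph V) (k : ℕ) (b : Bool) (v : V) :
    Set (V → Bool) :=
  {z | z v = b ∧ min k (G.degree v) ≤ ((G.neighborFinset v).filter (fun u => z u = b)).card}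

/-- Fractional `q`-neighborhood exposure to condition `b`. -/
def fracExp {V : Type*} [Fintype V] (G : SimpleGraph V) (q : ℝ) (b : Bool) (v : V) :
    Set (V → Bool) :=
  {z | z v = b ∧
    q * (G.degree v : ℝ) ≤ (((G.neighborFinset v).filter (fun u => z u = b)).card : ℝ)}

/-- The ball of radius `r` around `v`: vertices reachable from `v` within
graph distance `r`. -/
def gball {V : Type*} [Fintype V] (G : SimpleGraph V) (v : V) (r : ℕ) : Finset V :=
  Finset.univ.filter (fun u => G.Reachable v u ∧ G.dist v u ≤ r)

/-! ### Auxiliary probability lemmas -/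

section AuxProb

variable {J : Type*} [Fintype J] (p : ℝ)

lemma coinWt_nonneg (hp0 : 0 ≤ p) (hp1 : p ≤ 1) (x : J → Bool) : 0 ≤ coinWt p x := by
  unfold coinWt
  exact Finset.prod_nonneg fun j _ => by
    by_cases h : x j <;> simp [h] <;> linarith

lemma sum_coinWt : ∑ x : J → Bool, coinWt p x = 1 := by
  classical
  have h := Fintype.prod_sum (fun (_ : J) (b : Bool) => if b then p else 1 - p)
  unfold coinWt
  rw [← h]
  simp

lemma sum_coinWt_indicator (S : Finset J) (b₀ : Bool) :
    ∑ x : J → Bool, coinWt p x * (if ∀ j ∈ S, x j = b₀ then (1:ℝ) else 0)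
      = (if b₀ then p else 1 - p) ^ S.card := by
  classical
  have h1 : ∀ x : J → Bool,
      coinWt p x * (if ∀ j ∈ S, x j = b₀ then (1:ℝ) else 0)
        = ∏ j, ((if x j then p else 1 - p) *
            (if j ∈ S then (if x j = b₀ then (1:ℝ) else 0) else 1)) := by
    intro x
    rw [Finset.prod_mul_distrib]
    unfold coinWt
    congr 1
    rw [Finset.prod_ite_mem, Finset.univ_inter, Finset.prod_boole]
    simp
  simp only [h1]
  have h2 := Fintype.prod_sum (fun (j : J) (b : Bool) =>
    (if b then p else 1 - p) * (if j ∈ S then (if b = b₀ then (1:ℝ) else 0) else 1))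
  rw [← h2]
  have h3 : ∀ j : J, (∑ b : Bool, (if b then p else 1 - p) *
      (if j ∈ S then (if b = b₀ then (1:ℝ) else 0) else 1))
        = (if j ∈ S then (if b₀ then p else 1 - p) else 1) := by
    intro j
    cases b₀ <;> by_cases h : j ∈ S <;> simp [h]
  rw [Finset.prod_congr rfl (fun j _ => h3 j)]
  rw [Finset.prod_ite_mem, Finset.univ_inter, Finset.prod_const]

lemma mu_le_of_le (hp0 : 0 ≤ p) (hp1 : p ≤ 1) (f : (J → Bool) → ℝ) (M : ℝ)
    (h : ∀ x, f x ≤ M) : ∑ x : J → Bool, coinWt p x * f x ≤ M := by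
  calc ∑ x : J → Bool, coinWt p x * f x
      ≤ ∑ x : J → Bool, coinWt p x * M :=
        Finset.sum_le_sum fun x _ =>
          mul_le_mul_of_nonneg_left (h x) (coinWt_nonneg p hp0 hp1 x)
    _ = M := by rw [← Finset.sum_mul, sum_coinWt, one_mul]

lemma mu_ge_of_ge (hp0 : 0 ≤ p) (hp1 : p ≤ 1) (f : (J → Bool) → ℝ) (M : ℝ)
    (h : ∀ x, M ≤ f x) : M ≤ ∑ x : J → Bool, coinWt p x * f x := by
  calc M = ∑ x : J → Bool, coinWt p x * M := by rw [← Finset.sum_mul, sum_coinWt, one_mul]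
    _ ≤ ∑ x : J → Bool, coinWt p x * f x :=
        Finset.sum_le_sum fun x _ =>
          mul_le_mul_of_nonneg_left (h x) (coinWt_nonneg p hp0 hp1 x)

end AuxProb

section Merge

variable {J : Type*} [Fintype J]

/-- Merge two coin vectors along `S`. -/
def mrg (S : Finset J) (x y : J → Bool) : J → Bool := fun j => if j ∈ S then x j else y j

omit [Fintype J] in
lemma mrg_involutive (S : Finset J) :
    Function.Involutive (fun z : (J → Bool) × (J → Bool) => (mrg S z.1 z.2, mrg S z.2 z.1)) := by
  rintro ⟨x, y⟩
  simp only [mrg, Prod.mk.injEq]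
  constructor <;> funext j <;> by_cases h : j ∈ S <;> simp [mrg, h]

lemma merge_swap_sum (S : Finset J) (F : (J → Bool) → (J → Bool) → ℝ) :
    ∑ x : J → Bool, ∑ y : J → Bool, F (mrg S x y) (mrg S y x)
      = ∑ x : J → Bool, ∑ y : J → Bool, F x y := by
  classical
  calc ∑ x : J → Bool, ∑ y : J → Bool, F (mrg S x y) (mrg S y x)
      = ∑ z : (J → Bool) × (J → Bool), F (mrg S z.1 z.2) (mrg S z.2 z.1) := by
        rw [← Fintype.sum_prod_type']
    _ = ∑ z : (J → Bool) × (J → Bool), F z.1 z.2 :=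
        Equiv.sum_comp ((mrg_involutive S).toPerm _) (fun z => F z.1 z.2)
    _ = ∑ x : J → Bool, ∑ y : J → Bool, F x y := Fintype.sum_prod_type' _

lemma sum_mul_sum_of_dep (S : Finset J) (A B : (J → Bool) → ℝ)
    (hA : ∀ x y, (∀ j ∈ S, x j = y j) → A x = A y)
    (hB : ∀ x y, (∀ j ∉ S, x j = y j) → B x = B y) :
    (∑ x : J → Bool, A x) * (∑ x : J → Bool, B x)
      = (2:ℝ) ^ (Fintype.card J) * ∑ x : J → Bool, A x * B x := by
  classical
  rw [Finset.sum_mul_sum]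
  have key : ∀ x y : J → Bool, A (mrg S x y) = A x ∧ B (mrg S y x) = B x := by
    intro x y
    constructor
    · exact hA _ _ (fun j hj => by simp [mrg, hj])
    · exact hB _ _ (fun j hj => by simp [mrg, hj])
  have h1 : ∑ x : J → Bool, ∑ y : J → Bool, A (mrg S x y) * B (mrg S y x)
      = ∑ x : J → Bool, ∑ y : J → Bool, A x * B y := merge_swap_sum S (fun u v => A u * B v)
  have h2 : ∑ x : J → Bool, ∑ y : J → Bool, A (mrg S x y) * B (mrg S y x)
      = ∑ x : J → Bool, ∑ _y : J → Bool, A x * B x := by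
    refine Finset.sum_congr rfl fun x _ => Finset.sum_congr rfl fun y _ => ?_
    rw [(key x y).1, (key x y).2]
  rw [← h1, h2]
  have hc : ∑ x : J → Bool, ∑ _y : J → Bool, A x * B x
      = ∑ x : J → Bool, (2:ℝ) ^ (Fintype.card J) * (A x * B x) := by
    refine Finset.sum_congr rfl fun x _ => ?_
    rw [Finset.sum_const, nsmul_eq_mul, Finset.card_univ, Fintype.card_fun,
      Fintype.card_bool]
    push_cast
    ring
  rw [hc, ← Finset.mul_sum]

lemma coinWt_mul_split (p : ℝ) (S : Finset J) (f g : (J → Bool) → ℝ)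
    (hf : ∀ x y, (∀ j ∈ S, x j = y j) → f x = f y)
    (hg : ∀ x y, (∀ j ∉ S, x j = y j) → g x = g y) :
    ∑ x : J → Bool, coinWt p x * (f x * g x)
      = (∑ x : J → Bool, coinWt p x * f x) * (∑ x : J → Bool, coinWt p x * g x) := by
  classical
  set Wf : (J → Bool) → ℝ := fun x => ∏ j ∈ S, (if x j then p else 1 - p) with hWf
  set Wg : (J → Bool) → ℝ := fun x => ∏ j ∈ Sᶜ, (if x j then p else 1 - p) with hWg
  have hW : ∀ x : J → Bool, coinWt p x = Wf x * Wg x := by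
    intro x; rw [hWf, hWg]; exact (Finset.prod_mul_prod_compl S _).symm
  have hWfdep : ∀ x y, (∀ j ∈ S, x j = y j) → Wf x = Wf y := by
    intro x y h; exact Finset.prod_congr rfl fun j hj => by rw [h j hj]
  have hWgdep : ∀ x y, (∀ j ∉ S, x j = y j) → Wg x = Wg y := by
    intro x y h
    exact Finset.prod_congr rfl fun j hj => by rw [h j (Finset.mem_compl.mp hj)]
  set N := Fintype.card J
  have e1 := sum_mul_sum_of_dep S (fun x => Wf x * f x) (fun x => Wg x * g x)
    (fun x y h => show Wf x * f x = Wf y * f y by rw [hWfdep x y h, hf x y h])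
    (fun x y h => show Wg x * g x = Wg y * g y by rw [hWgdep x y h, hg x y h])
  have e2 := sum_mul_sum_of_dep S (fun x => Wf x * f x) (fun x => Wg x)
    (fun x y h => show Wf x * f x = Wf y * f y by rw [hWfdep x y h, hf x y h]) hWgdep
  have e3 := sum_mul_sum_of_dep S (fun x => Wf x) (fun x => Wg x * g x)
    hWfdep (fun x y h => show Wg x * g x = Wg y * g y by rw [hWgdep x y h, hg x y h])
  have e4 := sum_mul_sum_of_dep S Wf Wg hWfdep hWgdep
  beta_reduce at e1 e2 e3 e4
  have r1 : ∑ x : J → Bool, (Wf x * f x) * (Wg x * g x)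
      = ∑ x : J → Bool, coinWt p x * (f x * g x) :=
    Finset.sum_congr rfl fun x _ => by rw [hW x]; ring
  have r2 : ∑ x : J → Bool, (Wf x * f x) * (Wg x)
      = ∑ x : J → Bool, coinWt p x * f x :=
    Finset.sum_congr rfl fun x _ => by rw [hW x]; ring
  have r3 : ∑ x : J → Bool, (Wf x) * (Wg x * g x)
      = ∑ x : J → Bool, coinWt p x * g x :=
    Finset.sum_congr rfl fun x _ => by rw [hW x]; ring
  have r4 : ∑ x : J → Bool, Wf x * Wg x = 1 := by
    rw [← sum_coinWt (J := J) p]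
    exact Finset.sum_congr rfl fun x _ => (hW x).symm
  rw [r1] at e1; rw [r2] at e2; rw [r3] at e3; rw [r4, mul_one] at e4
  have h2N : ((2:ℝ) ^ N) ≠ 0 := by positivity
  have key : (2:ℝ)^N * ((2:ℝ)^N * (∑ x : J → Bool, coinWt p x * (f x * g x)))
      = (2:ℝ)^N * ((2:ℝ)^N *
        ((∑ x : J → Bool, coinWt p x * f x) * (∑ x : J → Bool, coinWt p x * g x))) := by
    calc (2:ℝ)^N * ((2:ℝ)^N * (∑ x : J → Bool, coinWt p x * (f x * g x)))
        = ((2:ℝ)^N * (∑ x : J → Bool, coinWt p x * (f x * g x))) * ((2:ℝ)^N) := by ring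
      _ = ((∑ x : J → Bool, Wf x * f x) * (∑ x : J → Bool, Wg x * g x))
            * ((∑ x : J → Bool, Wf x) * (∑ x : J → Bool, Wg x)) := by rw [← e1, ← e4]
      _ = ((∑ x : J → Bool, Wf x * f x) * (∑ x : J → Bool, Wg x))
            * ((∑ x : J → Bool, Wf x) * (∑ x : J → Bool, Wg x * g x)) := by ring
      _ = ((2:ℝ)^N * (∑ x : J → Bool, coinWt p x * f x))
            * ((2:ℝ)^N * (∑ x : J → Bool, coinWt p x * g x)) := by rw [e2, e3]
      _ = (2:ℝ)^N * ((2:ℝ)^N *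
            ((∑ x : J → Bool, coinWt p x * f x) * (∑ x : J → Bool, coinWt p x * g x))) := by
          ring
  exact mul_left_cancel₀ h2N (mul_left_cancel₀ h2N
    (by rw [← mul_assoc, ← mul_assoc] at key ⊢; exact key))

end Merge

/-! ### Horvitz–Thompson term and abstract bounds -/

/-- The per-vertex Horvitz–Thompson term as a function of the cluster coins. -/
def htTerm {V : Type*} [Fintype V] {J : Type*} [Fintype J]
    (p : ℝ) (c : V → J) (σ1 σ0 : V → Set (V → Bool)) (Y : V → (V → Bool) → ℝ)
    (i : V) (x : J → Bool) : ℝ :=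
  (if (fun v => x (c v)) ∈ σ1 i then Y i (fun v => x (c v)) else 0) / clusterPr p c (σ1 i)
    - (if (fun v => x (c v)) ∈ σ0 i then Y i (fun v => x (c v)) else 0) / clusterPr p c (σ0 i)

lemma clusterPr_ge {V J : Type*} [Fintype V] [Fintype J] (p : ℝ) (hp0 : 0 ≤ p) (hp1 : p ≤ 1)
    (c : V → J) (A : Set (V → Bool)) (S : Finset J) (b₀ : Bool)
    (hA : ∀ x : J → Bool, (∀ j ∈ S, x j = b₀) → (fun v => x (c v)) ∈ A) :
    (if b₀ then p else 1 - p) ^ S.card ≤ clusterPr p c A := by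
  rw [← sum_coinWt_indicator p S b₀]
  unfold clusterPr
  refine Finset.sum_le_sum fun x _ => ?_
  by_cases h : ∀ j ∈ S, x j = b₀
  · rw [if_pos h, if_pos (hA x h)]
  · rw [if_neg h, mul_zero]
    refine mul_nonneg (coinWt_nonneg p hp0 hp1 x) ?_
    split <;> norm_num

lemma clusterVar_bound {V J : Type*} [Fintype V] [Fintype J]
    (p : ℝ) (hp0 : 0 ≤ p) (hp1 : p ≤ 1)
    (c : V → J) (σ1 σ0 : V → Set (V → Bool)) (Y : V → (V → Bool) → ℝ)
    (S : V → Finset J) (M : ℝ) (hM : 0 ≤ M) (C : ℝ)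
    (hn : 0 < (Fintype.card V : ℝ))
    (htb : ∀ (i : V) (x : J → Bool), |htTerm p c σ1 σ0 Y i x| ≤ M)
    (hdep : ∀ (i : V) (x y : J → Bool), (∀ j ∈ S i, x j = y j) →
      htTerm p c σ1 σ0 Y i x = htTerm p c σ1 σ0 Y i y)
    (D : V → Finset V)
    (hD : ∀ i i' : V, ¬ Disjoint (S i) (S i') → i' ∈ D i)
    (hDcard : ∀ i : V, ((D i).card : ℝ) ≤ C) :
    clusterVar p c σ1 σ0 Y ≤ (Fintype.card V : ℝ)⁻¹ * (C * (2 * M ^ 2)) := by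
  classical
  set t : V → (J → Bool) → ℝ := htTerm p c σ1 σ0 Y with hts
  have hht : ∀ x : J → Bool,
      htEst (clusterPr p c) σ1 σ0 Y (fun v => x (c v))
        = (Fintype.card V : ℝ)⁻¹ * ∑ i : V, t i x := fun x => rfl
  set c1 : ℝ := (Fintype.card V : ℝ)⁻¹ with hc1
  have hc10 : 0 ≤ c1 := by positivity
  unfold clusterVar
  simp only [hht]
  have e1 : ∑ x : J → Bool, coinWt p x * (c1 * ∑ i : V, t i x) ^ 2
      = c1 ^ 2 * ∑ x : J → Bool, coinWt p x * (∑ i : V, t i x) ^ 2 := by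
    rw [Finset.mul_sum]
    exact Finset.sum_congr rfl fun x _ => by ring
  have e2 : ∑ x : J → Bool, coinWt p x * (c1 * ∑ i : V, t i x)
      = c1 * ∑ x : J → Bool, coinWt p x * (∑ i : V, t i x) := by
    rw [Finset.mul_sum]
    exact Finset.sum_congr rfl fun x _ => by ring
  rw [e1, e2, mul_pow]
  have hA : ∑ x : J → Bool, coinWt p x * (∑ i : V, t i x) ^ 2
      = ∑ i : V, ∑ i' : V, ∑ x : J → Bool, coinWt p x * (t i x * t i' x) := by
    calc ∑ x : J → Bool, coinWt p x * (∑ i : V, t i x) ^ 2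
        = ∑ x : J → Bool, ∑ i : V, ∑ i' : V, coinWt p x * (t i x * t i' x) := by
          refine Finset.sum_congr rfl fun x _ => ?_
          rw [sq, Finset.sum_mul_sum]
          simp only [Finset.mul_sum]
      _ = ∑ i : V, ∑ x : J → Bool, ∑ i' : V, coinWt p x * (t i x * t i' x) :=
          Finset.sum_comm
      _ = ∑ i : V, ∑ i' : V, ∑ x : J → Bool, coinWt p x * (t i x * t i' x) :=
          Finset.sum_congr rfl fun i _ => Finset.sum_comm
  have hB : ∑ x : J → Bool, coinWt p x * (∑ i : V, t i x)
      = ∑ i : V, ∑ x : J → Bool, coinWt p x * t i x := by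
    calc ∑ x : J → Bool, coinWt p x * (∑ i : V, t i x)
        = ∑ x : J → Bool, ∑ i : V, coinWt p x * t i x := by
          refine Finset.sum_congr rfl fun x _ => ?_
          rw [Finset.mul_sum]
      _ = ∑ i : V, ∑ x : J → Bool, coinWt p x * t i x := Finset.sum_comm
  rw [hA, hB]
  have hB2 : (∑ i : V, ∑ x : J → Bool, coinWt p x * t i x) ^ 2
      = ∑ i : V, ∑ i' : V,
          (∑ x : J → Bool, coinWt p x * t i x) * (∑ x : J → Bool, coinWt p x * t i' x) := by
    rw [sq, Finset.sum_mul_sum]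
  rw [hB2]
  have key : ∀ i i' : V,
      (∑ x : J → Bool, coinWt p x * (t i x * t i' x))
        - (∑ x : J → Bool, coinWt p x * t i x) * (∑ x : J → Bool, coinWt p x * t i' x)
      ≤ (if Disjoint (S i) (S i') then 0 else 2 * M ^ 2) := by
    intro i i'
    by_cases hd : Disjoint (S i) (S i')
    · rw [if_pos hd]
      have hsplit := coinWt_mul_split p (S i) (t i) (t i') (hdep i)
        (fun x y h => hdep i' x y (fun j hj => h j (Finset.disjoint_right.mp hd hj)))
      rw [hsplit, sub_self]
    · rw [if_neg hd]
      have h1 : (∑ x : J → Bool, coinWt p x * (t i x * t i' x)) ≤ M ^ 2 := by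
        refine mu_le_of_le p hp0 hp1 _ _ fun x => ?_
        calc t i x * t i' x ≤ |t i x * t i' x| := le_abs_self _
          _ = |t i x| * |t i' x| := abs_mul _ _
          _ ≤ M * M := mul_le_mul (htb i x) (htb i' x) (abs_nonneg _) hM
          _ = M ^ 2 := (sq M).symm
      have habs : ∀ iv : V, |∑ x : J → Bool, coinWt p x * t iv x| ≤ M := by
        intro iv
        refine abs_le.mpr ⟨?_, ?_⟩
        · exact mu_ge_of_ge p hp0 hp1 _ _ fun x => (abs_le.mp (htb iv x)).1
        · exact mu_le_of_le p hp0 hp1 _ _ fun x => (abs_le.mp (htb iv x)).2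
      have h2 : -(M ^ 2) ≤ (∑ x : J → Bool, coinWt p x * t i x)
          * (∑ x : J → Bool, coinWt p x * t i' x) := by
        have habs2 : |(∑ x : J → Bool, coinWt p x * t i x)
            * (∑ x : J → Bool, coinWt p x * t i' x)| ≤ M ^ 2 := by
          rw [abs_mul]
          calc |∑ x : J → Bool, coinWt p x * t i x| * |∑ x : J → Bool, coinWt p x * t i' x|
              ≤ M * M := mul_le_mul (habs i) (habs i') (abs_nonneg _) hM
            _ = M ^ 2 := (sq M).symm
        exact (abs_le.mp habs2).1
      linarith
  have hsum : ∑ i : V, ∑ i' : V,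
      ((∑ x : J → Bool, coinWt p x * (t i x * t i' x))
        - (∑ x : J → Bool, coinWt p x * t i x) * (∑ x : J → Bool, coinWt p x * t i' x))
      ≤ (Fintype.card V : ℝ) * (C * (2 * M ^ 2)) := by
    calc ∑ i : V, ∑ i' : V, ((∑ x : J → Bool, coinWt p x * (t i x * t i' x))
          - (∑ x : J → Bool, coinWt p x * t i x) * (∑ x : J → Bool, coinWt p x * t i' x))
        ≤ ∑ i : V, ∑ i' : V, (if Disjoint (S i) (S i') then 0 else 2 * M ^ 2) :=
          Finset.sum_le_sum fun i _ => Finset.sum_le_sum fun i' _ => key i i'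
      _ ≤ ∑ i : V, ∑ i' : V, (if i' ∈ D i then 2 * M ^ 2 else 0) := by
          refine Finset.sum_le_sum fun i _ => Finset.sum_le_sum fun i' _ => ?_
          by_cases hd : Disjoint (S i) (S i')
          · rw [if_pos hd]
            split <;> positivity
          · rw [if_neg hd, if_pos (hD i i' hd)]
      _ ≤ ∑ _i : V, C * (2 * M ^ 2) := by
          refine Finset.sum_le_sum fun i _ => ?_
          rw [Finset.sum_ite_mem, Finset.univ_inter, Finset.sum_const, nsmul_eq_mul]
          exact mul_le_mul_of_nonneg_right (hDcard i) (by positivity)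
      _ = (Fintype.card V : ℝ) * (C * (2 * M ^ 2)) := by
          rw [Finset.sum_const, nsmul_eq_mul, Finset.card_univ]
  have hdiff : (∑ i : V, ∑ i' : V, ∑ x : J → Bool, coinWt p x * (t i x * t i' x))
      - (∑ i : V, ∑ i' : V,
          (∑ x : J → Bool, coinWt p x * t i x) * (∑ x : J → Bool, coinWt p x * t i' x))
      = ∑ i : V, ∑ i' : V,
          ((∑ x : J → Bool, coinWt p x * (t i x * t i' x))
            - (∑ x : J → Bool, coinWt p x * t i x)
              * (∑ x : J → Bool, coinWt p x * t i' x)) := by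
    rw [← Finset.sum_sub_distrib]
    exact Finset.sum_congr rfl fun i _ => by rw [Finset.sum_sub_distrib]
  have hne : (Fintype.card V : ℝ) ≠ 0 := ne_of_gt hn
  calc c1 ^ 2 * (∑ i : V, ∑ i' : V, ∑ x : J → Bool, coinWt p x * (t i x * t i' x))
        - c1 ^ 2 * (∑ i : V, ∑ i' : V,
            (∑ x : J → Bool, coinWt p x * t i x) * (∑ x : J → Bool, coinWt p x * t i' x))
      = c1 ^ 2 * (∑ i : V, ∑ i' : V,
          ((∑ x : J → Bool, coinWt p x * (t i x * t i' x))
            - (∑ x : J → Bool, coinWt p x * t i x)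
              * (∑ x : J → Bool, coinWt p x * t i' x))) := by
        rw [← hdiff]; ring
    _ ≤ c1 ^ 2 * ((Fintype.card V : ℝ) * (C * (2 * M ^ 2))) :=
        mul_le_mul_of_nonneg_left hsum (by positivity)
    _ = c1 * (C * (2 * M ^ 2)) := by
        rw [hc1]
        field_simp


/-- **Linear variance bound for 3-net cluster randomization on restricted-growth
graphs.**  For every `κ ≥ 1`, `p ∈ (0,1)` and `Y_M > 0` there are constants `a, b`
such that: for every connected `d`-regular restricted-growth graph `G` with growth
constant `κ` on `n` vertices, every 3-net clustering of `G` (centers pairwise at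
distance ≥ 3 covering every vertex within distance 2, each vertex assigned to a
nearest center), cluster randomization with parameter `p`, any one of the exposure
conditions (full, absolute `k`-, or fractional `q`-neighborhood), and any
responses constant on each exposure event with values in `[0, Y_M]`, the variance
of the Horvitz–Thompson estimator is at most `(a + b·d)/n`. -/
theorem statement19 (κ : ℝ) (hκ : 1 ≤ κ) (p : ℝ) (hp : p ∈ Set.Ioo (0:ℝ) 1)
    (YM : ℝ) (hYM : 0 < YM) :
    ∃ a b : ℝ, ∀ (V : Type) [Fintype V] (G : SimpleGraph V), G.Connected →
      ∀ d : ℕ, (∀ v, G.degree v = d) →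
      (∀ (v : V) (r : ℕ), 1 ≤ r →
        ((gball G v (r + 1)).card : ℝ) ≤ κ * ((gball G v r).card : ℝ)) →
      ∀ (k : ℕ) (vc : Fin k → V) (asg : V → Fin k),
      (∀ i j : Fin k, i ≠ j → 3 ≤ G.dist (vc i) (vc j)) →
      (∀ w : V, ∃ j, G.dist (vc j) w ≤ 2) →
      (∀ (w : V) (j : Fin k), G.dist (vc (asg w)) w ≤ G.dist (vc j) w) →
      ∀ σ1 σ0 : V → Set (V → Bool),
      ((σ1 = fullExp G true ∧ σ0 = fullExp G false) ∨
       (∃ kk : ℕ, σ1 = absExp G kk true ∧ σ0 = absExp G kk false) ∨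
       (∃ q : ℝ, q ∈ Set.Icc (0:ℝ) 1 ∧ σ1 = fracExp G q true ∧ σ0 = fracExp G q false)) →
      ∀ Y : V → (V → Bool) → ℝ,
      (∀ i, ∀ z ∈ σ1 i, ∀ z' ∈ σ1 i, Y i z = Y i z') →
      (∀ i, ∀ z ∈ σ0 i, ∀ z' ∈ σ0 i, Y i z = Y i z') →
      (∀ i, ∀ z ∈ σ1 i ∪ σ0 i, Y i z ∈ Set.Icc (0:ℝ) YM) →
      clusterVar p asg σ1 σ0 Y ≤ (a + b * (d : ℝ)) / (Fintype.card V : ℝ) := by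
  obtain ⟨hp0, hp1⟩ := hp
  set N : ℕ := ⌊κ ^ 3⌋₊ with hN
  have hq0 : (0:ℝ) < 1 - p := by linarith
  have hpN : (0:ℝ) < p ^ N := by positivity
  have h1pN : (0:ℝ) < (1 - p) ^ N := by positivity
  set M : ℝ := YM / p ^ N + YM / (1 - p) ^ N with hM
  have hM0 : 0 ≤ M := by positivity
  refine ⟨2 * M ^ 2 * κ ^ 5, 2 * M ^ 2 * κ ^ 5, ?_⟩
  intro V _ G hconn d hreg hgrow k vc asg hsep hcov hnear σ1 σ0 hexp Y hY1 hY0 hYb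
  have hreach : ∀ u v : V, G.Reachable u v := fun u v => hconn.preconnected u v
  have hmem : ∀ (v : V) (r : ℕ) (u : V), u ∈ gball G v r ↔ G.dist v u ≤ r := by
    intro v r u
    simp [gball, hreach v u]
  have htri : ∀ u v w : V, G.dist u w ≤ G.dist u v + G.dist v w :=
    fun u v w => hconn.dist_triangle
  -- radius-1 balls
  have hB1 : ∀ v : V, gball G v 1 = insert v (G.neighborFinset v) := by
    intro v
    ext u
    rw [hmem, Finset.mem_insert, SimpleGraph.mem_neighborFinset]
    constructor
    · intro h
      rcases Nat.le_one_iff_eq_zero_or_eq_one.mp h with h0 | h1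
      · exact Or.inl (hconn.dist_eq_zero_iff.mp h0).symm
      · exact Or.inr (SimpleGraph.dist_eq_one_iff_adj.mp h1)
    · rintro (rfl | ha)
      · simp [SimpleGraph.dist_self]
      · exact le_of_eq (SimpleGraph.dist_eq_one_iff_adj.mpr ha)
  have hB1card : ∀ v : V, (gball G v 1).card = d + 1 := by
    intro v
    rw [hB1 v, Finset.card_insert_of_notMem (SimpleGraph.notMem_neighborFinset_self G v),
      SimpleGraph.card_neighborFinset_eq_degree, hreg v]
  have hself : ∀ i : V, i ∈ gball G i 1 := by
    intro i
    rw [hmem, SimpleGraph.dist_self]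
    omega
  have hnbr : ∀ i u : V, u ∈ G.neighborFinset i → u ∈ gball G i 1 := by
    intro i u hu
    rw [hmem]
    exact le_of_eq (SimpleGraph.dist_eq_one_iff_adj.mpr ((SimpleGraph.mem_neighborFinset G i u).mp hu))
  -- growth estimates
  have hgrow_pow : ∀ (v : V) (s : ℕ), ((gball G v (1 + s)).card : ℝ)
      ≤ κ ^ s * ((gball G v 1).card : ℝ) := by
    intro v s
    induction s with
    | zero => simp
    | succ s ih =>
        have h := hgrow v (1 + s) (by omega)
        calc ((gball G v (1 + (s + 1))).card : ℝ)
            = ((gball G v ((1 + s) + 1)).card : ℝ) := by rw [show 1 + (s+1) = (1+s)+1 by omega]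
          _ ≤ κ * ((gball G v (1 + s)).card : ℝ) := h
          _ ≤ κ * (κ ^ s * ((gball G v 1).card : ℝ)) :=
              mul_le_mul_of_nonneg_left ih (by linarith)
          _ = κ ^ (s + 1) * ((gball G v 1).card : ℝ) := by ring
  have hB4 : ∀ v : V, ((gball G v 4).card : ℝ) ≤ κ ^ 3 * ((d:ℝ) + 1) := by
    intro v
    have h := hgrow_pow v 3
    rw [show 1 + 3 = 4 from rfl, hB1card v] at h
    calc ((gball G v 4).card : ℝ) ≤ κ ^ 3 * ((d + 1 : ℕ) : ℝ) := h
      _ = κ ^ 3 * ((d:ℝ) + 1) := by push_cast; ring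
  have hB6 : ∀ v : V, ((gball G v 6).card : ℝ) ≤ κ ^ 5 * ((d:ℝ) + 1) := by
    intro v
    have h := hgrow_pow v 5
    rw [show 1 + 5 = 6 from rfl, hB1card v] at h
    calc ((gball G v 6).card : ℝ) ≤ κ ^ 5 * ((d + 1 : ℕ) : ℝ) := h
      _ = κ ^ 5 * ((d:ℝ) + 1) := by push_cast; ring
  -- clusters relevant to a vertex
  set Sc : V → Finset (Fin k) := fun i => (gball G i 1).image asg with hSc
  have hasg_mem : ∀ (i u : V), u ∈ gball G i 1 → asg u ∈ Sc i :=
    fun i u hu => Finset.mem_image_of_mem asg hu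
  have hcnear : ∀ w : V, G.dist (vc (asg w)) w ≤ 2 := by
    intro w
    obtain ⟨j0, hj0⟩ := hcov w
    exact (hnear w j0).trans hj0
  have hScmem : ∀ (i : V) (j : Fin k), j ∈ Sc i → G.dist i (vc j) ≤ 3 := by
    intro i j hj
    obtain ⟨v, hv, rfl⟩ := Finset.mem_image.mp hj
    have h1 : G.dist i v ≤ 1 := (hmem _ _ _).mp hv
    calc G.dist i (vc (asg v)) ≤ G.dist i v + G.dist v (vc (asg v)) := htri _ _ _
      _ ≤ 1 + 2 := add_le_add h1 (by rw [SimpleGraph.dist_comm]; exact hcnear v)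
      _ = 3 := rfl
  have hScN : ∀ i : V, (Sc i).card ≤ N := by
    intro i
    have hsub : (Sc i).biUnion (fun j => gball G (vc j) 1) ⊆ gball G i 4 := by
      intro u hu
      obtain ⟨j, hj, hu2⟩ := Finset.mem_biUnion.mp hu
      rw [hmem]
      calc G.dist i u ≤ G.dist i (vc j) + G.dist (vc j) u := htri _ _ _
        _ ≤ 3 + 1 := add_le_add (hScmem i j hj) ((hmem _ _ _).mp hu2)
        _ = 4 := rfl
    have hdisj : ∀ j1 ∈ Sc i, ∀ j2 ∈ Sc i, j1 ≠ j2 →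
        Disjoint (gball G (vc j1) 1) (gball G (vc j2) 1) := by
      intro j1 _ j2 _ hne
      rw [Finset.disjoint_left]
      intro u h1 h2
      have hs := hsep j1 j2 hne
      have hle : G.dist (vc j1) (vc j2) ≤ 2 := by
        calc G.dist (vc j1) (vc j2) ≤ G.dist (vc j1) u + G.dist u (vc j2) := htri _ _ _
          _ ≤ 1 + 1 := add_le_add ((hmem _ _ _).mp h1)
              (by rw [SimpleGraph.dist_comm]; exact (hmem _ _ _).mp h2)
          _ = 2 := rfl
      omega
    have hcard : ((Sc i).biUnion (fun j => gball G (vc j) 1)).card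
        = (Sc i).card * (d + 1) := by
      rw [Finset.card_biUnion hdisj]
      rw [Finset.sum_congr rfl (fun j _ => hB1card (vc j)), Finset.sum_const, smul_eq_mul]
    have hle2 : ((Sc i).card : ℝ) * ((d:ℝ) + 1) ≤ κ ^ 3 * ((d:ℝ) + 1) := by
      have h1 : ((Sc i).card * (d + 1) : ℕ) ≤ (gball G i 4).card := by
        rw [← hcard]
        exact Finset.card_le_card hsub
      calc ((Sc i).card : ℝ) * ((d:ℝ) + 1) = (((Sc i).card * (d + 1) : ℕ) : ℝ) := by
            push_cast; ring
        _ ≤ ((gball G i 4).card : ℝ) := by exact_mod_cast h1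
        _ ≤ κ ^ 3 * ((d:ℝ) + 1) := hB4 i
    have hd1 : (0:ℝ) < (d:ℝ) + 1 := by positivity
    have : ((Sc i).card : ℝ) ≤ κ ^ 3 := le_of_mul_le_mul_right hle2 hd1
    exact Nat.le_floor this
  -- exposure events: locality and all-b membership
  have hmain : ∀ (b : Bool) (σ : V → Set (V → Bool)),
      (σ = fullExp G b ∨ (∃ kk, σ = absExp G kk b) ∨
        (∃ q, q ∈ Set.Icc (0:ℝ) 1 ∧ σ = fracExp G q b)) →
      (∀ (i : V) (z z' : V → Bool), (∀ u ∈ gball G i 1, z u = z' u) →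
          z ∈ σ i → z' ∈ σ i) ∧
      (∀ (i : V) (z : V → Bool), (∀ u ∈ gball G i 1, z u = b) → z ∈ σ i) := by
    intro b σ hσ
    have hfilter : ∀ (i : V) (z z' : V → Bool), (∀ u ∈ gball G i 1, z u = z' u) →
        (G.neighborFinset i).filter (fun u => z u = b)
          = (G.neighborFinset i).filter (fun u => z' u = b) := by
      intro i z z' hag
      refine Finset.filter_congr fun u hu => ?_
      rw [hag u (hnbr i u hu)]
    have hfull : ∀ (i : V) (z : V → Bool), (∀ u ∈ gball G i 1, z u = b) →
        (G.neighborFinset i).filter (fun u => z u = b) = G.neighborFinset i := by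
      intro i z hz
      exact Finset.filter_true_of_mem fun u hu => hz u (hnbr i u hu)
    rcases hσ with rfl | ⟨kk, rfl⟩ | ⟨q, hq, rfl⟩
    · constructor
      · rintro i z z' hag ⟨h1, h2⟩
        exact ⟨by rw [← hag i (hself i)]; exact h1,
          fun u hu => by rw [← hag u (hnbr i u hu)]; exact h2 u hu⟩
      · intro i z hz
        exact ⟨hz i (hself i), fun u hu => hz u (hnbr i u hu)⟩
    · constructor
      · rintro i z z' hag ⟨h1, h2⟩
        refine ⟨by rw [← hag i (hself i)]; exact h1, ?_⟩
        rw [← hfilter i z z' hag]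
        exact h2
      · intro i z hz
        refine ⟨hz i (hself i), ?_⟩
        rw [hfull i z hz, SimpleGraph.card_neighborFinset_eq_degree]
        exact min_le_right _ _
    · constructor
      · rintro i z z' hag ⟨h1, h2⟩
        refine ⟨by rw [← hag i (hself i)]; exact h1, ?_⟩
        rw [← hfilter i z z' hag]
        exact h2
      · intro i z hz
        refine ⟨hz i (hself i), ?_⟩
        rw [hfull i z hz, SimpleGraph.card_neighborFinset_eq_degree]
        have hd0 : (0:ℝ) ≤ (G.degree i : ℝ) := by positivity
        nlinarith [hq.1, hq.2]
  have hforms1 : σ1 = fullExp G true ∨ (∃ kk, σ1 = absExp G kk true) ∨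
      (∃ q, q ∈ Set.Icc (0:ℝ) 1 ∧ σ1 = fracExp G q true) := by
    rcases hexp with ⟨h1, _⟩ | ⟨kk, h1, _⟩ | ⟨q, hq, h1, _⟩
    exacts [Or.inl h1, Or.inr (Or.inl ⟨kk, h1⟩), Or.inr (Or.inr ⟨q, hq, h1⟩)]
  have hforms0 : σ0 = fullExp G false ∨ (∃ kk, σ0 = absExp G kk false) ∨
      (∃ q, q ∈ Set.Icc (0:ℝ) 1 ∧ σ0 = fracExp G q false) := by
    rcases hexp with ⟨_, h0⟩ | ⟨kk, _, h0⟩ | ⟨q, hq, _, h0⟩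
    exacts [Or.inl h0, Or.inr (Or.inl ⟨kk, h0⟩), Or.inr (Or.inr ⟨q, hq, h0⟩)]
  obtain ⟨hσ1mono, hσ1all⟩ := hmain true σ1 hforms1
  obtain ⟨hσ0mono, hσ0all⟩ := hmain false σ0 hforms0
  have hσ1iff : ∀ (i : V) (z z' : V → Bool), (∀ u ∈ gball G i 1, z u = z' u) →
      (z ∈ σ1 i ↔ z' ∈ σ1 i) := fun i z z' hag =>
    ⟨hσ1mono i z z' hag, hσ1mono i z' z (fun u hu => (hag u hu).symm)⟩
  have hσ0iff : ∀ (i : V) (z z' : V → Bool), (∀ u ∈ gball G i 1, z u = z' u) →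
      (z ∈ σ0 i ↔ z' ∈ σ0 i) := fun i z z' hag =>
    ⟨hσ0mono i z z' hag, hσ0mono i z' z (fun u hu => (hag u hu).symm)⟩
  -- probability lower bounds
  have hpr1 : ∀ i : V, p ^ N ≤ clusterPr p asg (σ1 i) := by
    intro i
    have h := clusterPr_ge p hp0.le hp1.le asg (σ1 i) (Sc i) true
      (fun x hx => hσ1all i _ (fun u hu => hx (asg u) (hasg_mem i u hu)))
    simp only [if_true] at h
    calc p ^ N ≤ p ^ (Sc i).card := pow_le_pow_of_le_one hp0.le hp1.le (hScN i)
      _ ≤ clusterPr p asg (σ1 i) := h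
  have hpr0 : ∀ i : V, (1 - p) ^ N ≤ clusterPr p asg (σ0 i) := by
    intro i
    have h := clusterPr_ge p hp0.le hp1.le asg (σ0 i) (Sc i) false
      (fun x hx => hσ0all i _ (fun u hu => hx (asg u) (hasg_mem i u hu)))
    simp only [Bool.false_eq_true, if_false] at h
    calc (1 - p) ^ N ≤ (1 - p) ^ (Sc i).card :=
          pow_le_pow_of_le_one hq0.le (by linarith) (hScN i)
      _ ≤ clusterPr p asg (σ0 i) := h
  have hpr1pos : ∀ i : V, 0 < clusterPr p asg (σ1 i) := fun i => lt_of_lt_of_le hpN (hpr1 i)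
  have hpr0pos : ∀ i : V, 0 < clusterPr p asg (σ0 i) := fun i => lt_of_lt_of_le h1pN (hpr0 i)
  have hpr1pos : ∀ i : V, 0 < clusterPr p asg (σ1 i) := fun i => lt_of_lt_of_le hpN (hpr1 i)
  have hpr0pos : ∀ i : V, 0 < clusterPr p asg (σ0 i) := fun i => lt_of_lt_of_le h1pN (hpr0 i)
  have hn : 0 < (Fintype.card V : ℝ) := by
    have := Fintype.card_pos_iff.mpr hconn.nonempty
    exact_mod_cast this
  -- bound on the HT terms
  have htb : ∀ (i : V) (x : Fin k → Bool), |htTerm p asg σ1 σ0 Y i x| ≤ M := by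
    intro i x
    simp only [htTerm]
    set z : V → Bool := fun v => x (asg v) with hz
    have hA : 0 ≤ (if z ∈ σ1 i then Y i z else 0) ∧ (if z ∈ σ1 i then Y i z else 0) ≤ YM := by
      by_cases h : z ∈ σ1 i
      · have hb := hYb i z (Set.mem_union_left _ h)
        rw [if_pos h]
        exact ⟨hb.1, hb.2⟩
      · rw [if_neg h]
        exact ⟨le_refl 0, hYM.le⟩
    have hB : 0 ≤ (if z ∈ σ0 i then Y i z else 0) ∧ (if z ∈ σ0 i then Y i z else 0) ≤ YM := by
      by_cases h : z ∈ σ0 i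
      · have hb := hYb i z (Set.mem_union_right _ h)
        rw [if_pos h]
        exact ⟨hb.1, hb.2⟩
      · rw [if_neg h]
        exact ⟨le_refl 0, hYM.le⟩
    have hA1 : (if z ∈ σ1 i then Y i z else 0) / clusterPr p asg (σ1 i) ≤ YM / p ^ N :=
      div_le_div₀ hYM.le hA.2 hpN (hpr1 i)
    have hA0 : 0 ≤ (if z ∈ σ1 i then Y i z else 0) / clusterPr p asg (σ1 i) :=
      div_nonneg hA.1 (hpr1pos i).le
    have hB1 : (if z ∈ σ0 i then Y i z else 0) / clusterPr p asg (σ0 i) ≤ YM / (1 - p) ^ N :=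
      div_le_div₀ hYM.le hB.2 h1pN (hpr0 i)
    have hB0 : 0 ≤ (if z ∈ σ0 i then Y i z else 0) / clusterPr p asg (σ0 i) :=
      div_nonneg hB.1 (hpr0pos i).le
    have hM1 : 0 ≤ YM / p ^ N := by positivity
    have hM2 : 0 ≤ YM / (1 - p) ^ N := by positivity
    refine abs_le.mpr ⟨by rw [hM]; linarith, by rw [hM]; linarith⟩
  -- locality of the HT terms
  have hdep : ∀ (i : V) (x y : Fin k → Bool), (∀ j ∈ Sc i, x j = y j) →
      htTerm p asg σ1 σ0 Y i x = htTerm p asg σ1 σ0 Y i y := by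
    intro i x y h
    have hag : ∀ u ∈ gball G i 1, (fun v => x (asg v)) u = (fun v => y (asg v)) u :=
      fun u hu => h (asg u) (hasg_mem i u hu)
    have h1iff := hσ1iff i _ _ hag
    have h0iff := hσ0iff i _ _ hag
    simp only [htTerm]
    have e1 : (if (fun v => x (asg v)) ∈ σ1 i then Y i (fun v => x (asg v)) else 0)
        = (if (fun v => y (asg v)) ∈ σ1 i then Y i (fun v => y (asg v)) else 0) := by
      by_cases hx : (fun v => x (asg v)) ∈ σ1 i
      · rw [if_pos hx, if_pos (h1iff.mp hx)]
        exact hY1 i _ hx _ (h1iff.mp hx)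
      · rw [if_neg hx, if_neg (fun hy => hx (h1iff.mpr hy))]
    have e0 : (if (fun v => x (asg v)) ∈ σ0 i then Y i (fun v => x (asg v)) else 0)
        = (if (fun v => y (asg v)) ∈ σ0 i then Y i (fun v => y (asg v)) else 0) := by
      by_cases hx : (fun v => x (asg v)) ∈ σ0 i
      · rw [if_pos hx, if_pos (h0iff.mp hx)]
        exact hY0 i _ hx _ (h0iff.mp hx)
      · rw [if_neg hx, if_neg (fun hy => hx (h0iff.mpr hy))]
    rw [e1, e0]
  -- apply the abstract variance bound
  have hDmem : ∀ i i' : V, ¬ Disjoint (Sc i) (Sc i') → i' ∈ gball G i 6 := by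
    intro i i' hnd
    obtain ⟨cc, hc1, hc2⟩ := Finset.not_disjoint_iff.mp hnd
    rw [hmem]
    calc G.dist i i' ≤ G.dist i (vc cc) + G.dist (vc cc) i' := htri _ _ _
      _ ≤ 3 + 3 := add_le_add (hScmem i cc hc1)
          (by rw [SimpleGraph.dist_comm]; exact hScmem i' cc hc2)
      _ = 6 := rfl
  have hfin := clusterVar_bound p hp0.le hp1.le asg σ1 σ0 Y Sc M hM0
    (κ ^ 5 * ((d:ℝ) + 1)) hn htb hdep (fun i => gball G i 6) hDmem (fun i => hB6 i)
  calc clusterVar p asg σ1 σ0 Y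
      ≤ (Fintype.card V : ℝ)⁻¹ * (κ ^ 5 * ((d:ℝ) + 1) * (2 * M ^ 2)) := hfin
    _ = (2 * M ^ 2 * κ ^ 5 + 2 * M ^ 2 * κ ^ 5 * (d : ℝ)) / (Fintype.card V : ℝ) := by
        rw [div_eq_mul_inv]
        ring

end
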